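/- Right-wing asymptotics with given limit price (Jacquier–Keller-Ressel form): suppose c : ℝ → (0,1) satisfies c(k) → u as k → ∞ for some 0 < u < 1, with (1-e^k)^+ ≤ c(k) < 1. Then Y_BS(k, c(k)) = √(2k) + Φ^{-1}(u) + O(1/√k + |c(k) - u|) as k → ∞. -/

import Mathlib

open MeasureTheory Real Filter Asymptotics Set

/-- Standard normal density. -/
noncomputable def phi (z : ℝ) : ℝ := (Real.sqrt (2 * Real.pi))⁻¹ * Real.exp (-z ^ 2 / 2)

/-- Standard normal CDF. -/
noncomputable def Phi (x : ℝ) : ℝ := ∫ z in Set.Iic x, phi z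

/-- Black–Scholes normalized call price. -/
noncomputable def CBS (k y : ℝ) : ℝ :=
  if 0 < y then Phi (-k / y + y / 2) - Real.exp k * Phi (-k / y - y / 2)
  else max (1 - Real.exp k) 0

/-- Implied total standard deviation: inverse of `CBS k` on `[0,∞)`. -/
noncomputable def YBS (k c : ℝ) : ℝ := sInf {y : ℝ | 0 ≤ y ∧ CBS k y = c}

/-- Inverse of the standard normal CDF on (0,1). -/
noncomputable def PhiInv (u : ℝ) : ℝ := sInf {x : ℝ | u ≤ Phi x}

/-- Extended-real quantile with the convention `Φ⁻¹(u) = +∞` for `u ≥ 1`, `-∞` for `u ≤ 0`. -/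
noncomputable def PhiInvE (u : ℝ) : EReal :=
  if 1 ≤ u then ⊤ else if u ≤ 0 then ⊥ else ((PhiInv u : ℝ) : EReal)









lemma phi_eq (z : ℝ) : phi z = (Real.sqrt (2 * Real.pi))⁻¹ * Real.exp (-(1/2) * z ^ 2) := by
  rw [phi]; ring_nf

lemma sqrt_two_pi_pos : 0 < Real.sqrt (2 * Real.pi) := Real.sqrt_pos.2 (by positivity)

lemma phi_pos (z : ℝ) : 0 < phi z := by
  unfold phi; positivity

lemma phi_le (z : ℝ) : phi z ≤ (Real.sqrt (2 * Real.pi))⁻¹ := by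
  unfold phi
  have : Real.exp (-z ^ 2 / 2) ≤ 1 := by
    rw [Real.exp_le_one_iff]; nlinarith [sq_nonneg z]
  nlinarith [inv_pos.2 sqrt_two_pi_pos, this]

lemma phi_cont : Continuous phi := by
  unfold phi; fun_prop

lemma phi_integrable : Integrable phi := by
  have : Integrable (fun z : ℝ => Real.exp (-(1/2) * z ^ 2)) := integrable_exp_neg_mul_sq (by norm_num)
  have h := this.const_mul (Real.sqrt (2 * Real.pi))⁻¹
  refine h.congr ?_
  filter_upwards with z
  rw [phi_eq]

lemma integral_phi : ∫ z, phi z = 1 := by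
  have h : ∫ z : ℝ, Real.exp (-(1/2) * z ^ 2) = Real.sqrt (Real.pi / (1/2)) := integral_gaussian (1/2)
  have : ∫ z, phi z = (Real.sqrt (2 * Real.pi))⁻¹ * ∫ z : ℝ, Real.exp (-(1/2) * z ^ 2) := by
    rw [← integral_const_mul]
    congr 1; ext z; rw [phi_eq]
  rw [this, h]
  rw [show Real.pi / (1/2) = 2 * Real.pi by ring]
  exact inv_mul_cancel₀ (ne_of_gt sqrt_two_pi_pos)

lemma Phi_sub_Phi (a b : ℝ) : Phi b - Phi a = ∫ z in a..b, phi z := by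
  unfold Phi
  exact intervalIntegral.integral_Iic_sub_Iic (f := phi) (μ := volume)
    phi_integrable.integrableOn phi_integrable.integrableOn

lemma hasDerivAt_Phi (x : ℝ) : HasDerivAt Phi (phi x) x := by
  have h : HasDerivAt (fun y => Phi 0 + ∫ z in (0:ℝ)..y, phi z) (phi x) x := by
    apply HasDerivAt.const_add
    exact intervalIntegral.integral_hasDerivAt_right
      (phi_integrable.intervalIntegrable)
      (phi_cont.stronglyMeasurableAtFilter _ _) phi_cont.continuousAt
  refine h.congr_of_eventuallyEq ?_
  filter_upwards with y
  have := Phi_sub_Phi 0 y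
  linarith

lemma Phi_cont : Continuous Phi := continuous_iff_continuousAt.2 fun x => (hasDerivAt_Phi x).continuousAt

lemma Phi_strictMono : StrictMono Phi := by
  apply strictMono_of_deriv_pos
  intro x
  rw [(hasDerivAt_Phi x).deriv]
  exact phi_pos x

lemma Phi_nonneg (x : ℝ) : 0 ≤ Phi x :=
  setIntegral_nonneg measurableSet_Iic (fun z _ => (phi_pos z).le)

lemma phi_even (x : ℝ) : phi (-x) = phi x := by
  unfold phi; rw [neg_pow]; norm_num

lemma Phi_add_Phi_neg (x : ℝ) : Phi x + Phi (-x) = 1 := by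
  have h1 : Phi (-x) = ∫ z in Ioi x, phi z := by
    unfold Phi
    rw [show (∫ z in Set.Iic (-x), phi z) = ∫ z in Set.Iic (-x), phi (-z) by
      congr 1; ext z; rw [phi_even]]
    exact integral_comp_neg_Iic (-x) phi |>.trans (by rw [neg_neg])
  rw [h1, ← integral_phi]
  show (∫ z in Set.Iic x, phi z) + _ = _
  exact (intervalIntegral.integral_Iic_add_Ioi phi_integrable.integrableOn phi_integrable.integrableOn)

lemma hasDerivAt_phi (z : ℝ) : HasDerivAt phi (-z * phi z) z := by
  have h1 : HasDerivAt (fun w : ℝ => -w ^ 2 / 2) (-z) z := by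
    have := ((hasDerivAt_pow 2 z).neg).div_const 2
    refine this.congr_deriv ?_
    simp; ring
  have h2 := (h1.exp).const_mul (Real.sqrt (2 * Real.pi))⁻¹
  refine h2.congr_deriv ?_
  unfold phi; ring

lemma phi_tendsto_atBot : Tendsto phi atBot (nhds 0) := by
  have h1 : Tendsto (fun z : ℝ => -z ^ 2 / 2) atBot atBot := by
    apply Tendsto.atBot_div_const (by norm_num)
    apply tendsto_neg_atTop_atBot.comp
    have : Tendsto (fun z : ℝ => (-z) * (-z)) atBot atTop :=
      tendsto_neg_atBot_atTop.atTop_mul_atTop₀ tendsto_neg_atBot_atTop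
    refine this.congr (fun z => by ring)
  have h2 := (Real.tendsto_exp_atBot.comp h1).const_mul (Real.sqrt (2 * Real.pi))⁻¹
  rw [mul_zero] at h2
  exact h2.congr (fun z => by simp [phi, Function.comp])

lemma integrable_mul_phi : Integrable (fun z => -z * phi z) := by
  have h := (integrable_mul_exp_neg_mul_sq (b := 1/2) (by norm_num)).const_mul
    (-(Real.sqrt (2 * Real.pi))⁻¹)
  refine h.congr ?_
  filter_upwards with z
  rw [phi_eq]; ring

lemma integral_neg_mul_phi (a : ℝ) : ∫ z in Iic a, -z * phi z = phi a := by
  have := integral_Iic_of_hasDerivAt_of_tendsto' (f := phi) (f' := fun z => -z * phi z)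
    (a := a) (m := 0) (fun x _ => hasDerivAt_phi x) integrable_mul_phi.integrableOn
    phi_tendsto_atBot
  rw [this, sub_zero]

lemma Phi_neg_le {x : ℝ} (hx : 0 < x) : Phi (-x) ≤ phi x / x := by
  have key : Phi (-x) ≤ ∫ z in Iic (-x), (-z / x) * phi z := by
    unfold Phi
    apply setIntegral_mono_on phi_integrable.integrableOn
    · exact (integrable_mul_phi.div_const x).congr
        (by filter_upwards with z; ring) |>.integrableOn
    · exact measurableSet_Iic
    · intro z hz
      have hz' : z ≤ -x := hz
      have h1 : 1 ≤ -z / x := by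
        rw [le_div_iff₀ hx]; linarith
      nlinarith [phi_pos z]
  have h2 : ∫ z in Iic (-x), (-z / x) * phi z = phi x / x := by
    rw [show (fun z => (-z / x) * phi z) = (fun z => (-z * phi z) / x) by ext z; ring]
    rw [integral_div, integral_neg_mul_phi, phi_even]
  linarith [key, h2.le]

lemma sqrt_two_pi_ge_one : 1 ≤ Real.sqrt (2 * Real.pi) := by
  rw [show (1:ℝ) = Real.sqrt 1 by simp]
  apply Real.sqrt_le_sqrt
  nlinarith [Real.pi_gt_three]

lemma phi_le_one (z : ℝ) : phi z ≤ 1 :=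
  (phi_le z).trans (by
    rw [inv_le_one_iff₀]; right; exact sqrt_two_pi_ge_one)

lemma Phi_pos (x : ℝ) : 0 < Phi x :=
  lt_of_le_of_lt (Phi_nonneg (x - 1)) (Phi_strictMono (by linarith))

lemma Phi_lt_one (x : ℝ) : Phi x < 1 := by
  have := Phi_add_Phi_neg x
  have := Phi_pos (-x)
  linarith

lemma exists_Phi_eq {u : ℝ} (hu0 : 0 < u) (hu1 : u < 1) : ∃ x, Phi x = u := by
  set T : ℝ := 1/u + 1/(1-u) + 1 with hT
  have hu' : 0 < 1 - u := by linarith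
  have hTpos : 0 < T := by positivity
  have hT1 : 1/T < u := by
    have h1 : 1/u < T := by
      have : 0 < 1/(1-u) + 1 := by positivity
      rw [hT]; linarith
    have := one_div_lt_one_div_of_lt (by positivity) h1
    rwa [one_div_one_div] at this
  have hT2 : 1/T < 1 - u := by
    have h1 : 1/(1-u) < T := by
      have : 0 < 1/u + 1 := by positivity
      rw [hT]; linarith
    have := one_div_lt_one_div_of_lt (by positivity) h1
    rwa [one_div_one_div] at this
  have hlo : Phi (-T) ≤ 1/T := by
    refine (Phi_neg_le hTpos).trans ?_
    gcongr
    exact phi_le_one T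
  have hhi : u ≤ Phi T := by
    have := Phi_add_Phi_neg T
    have h2 : Phi (-T) ≤ 1/T := hlo
    linarith
  have hmem : u ∈ Icc (Phi (-T)) (Phi T) := ⟨by linarith, hhi⟩
  have := intermediate_value_Icc (by linarith : -T ≤ T) Phi_cont.continuousOn hmem
  obtain ⟨x, _, hx⟩ := this
  exact ⟨x, hx⟩



lemma Phi_PhiInv {u : ℝ} (hu0 : 0 < u) (hu1 : u < 1) : Phi (PhiInv u) = u := by
  obtain ⟨x₀, hx₀⟩ := exists_Phi_eq hu0 hu1
  have hset : {x : ℝ | u ≤ Phi x} = Ici x₀ := by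
    ext x
    simp only [mem_setOf_eq, mem_Ici, ← hx₀]
    exact Phi_strictMono.le_iff_le
  rw [PhiInv, hset, csInf_Ici, hx₀]





lemma CBS_eq {k y : ℝ} (hy : 0 < y) :
    CBS k y = Phi (-k / y + y / 2) - Real.exp k * Phi (-k / y - y / 2) := if_pos hy

lemma phi_d1_eq {k y : ℝ} (hy : y ≠ 0) :
    Real.exp k * phi (-k / y - y / 2) = phi (-k / y + y / 2) := by
  unfold phi
  rw [mul_left_comm, ← Real.exp_add]
  congr 2
  field_simp
  ring

lemma hasDerivAt_CBSy (k : ℝ) {y : ℝ} (hy : 0 < y) :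
    HasDerivAt (fun w => Phi (-k / w + w / 2) - Real.exp k * Phi (-k / w - w / 2))
      (phi (-k / y + y / 2)) y := by
  have hy' : y ≠ 0 := ne_of_gt hy
  have hinv : HasDerivAt (fun w : ℝ => -k / w) (k / y ^ 2) y := by
    have h := (hasDerivAt_inv hy').const_mul (-k)
    have e1 : (fun w : ℝ => -k / w) = fun w : ℝ => -k * w⁻¹ := by
      funext w; rw [div_eq_mul_inv]
    have e2 : -k * -(y ^ 2)⁻¹ = k / y ^ 2 := by field_simp
    rw [e1, ← e2]; exact h
  have hhalf : HasDerivAt (fun w : ℝ => w / 2) (1 / 2) y := (hasDerivAt_id y).div_const 2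
  have hd1 : HasDerivAt (fun w : ℝ => -k / w + w / 2) (k / y ^ 2 + 1 / 2) y := hinv.add hhalf
  have hd2 : HasDerivAt (fun w : ℝ => -k / w - w / 2) (k / y ^ 2 - 1 / 2) y := hinv.sub hhalf
  have h1 : HasDerivAt (fun w => Phi (-k / w + w / 2))
      (phi (-k / y + y / 2) * (k / y ^ 2 + 1 / 2)) y :=
    (hasDerivAt_Phi _).comp y hd1
  have h2 : HasDerivAt (fun w => Real.exp k * Phi (-k / w - w / 2))
      (Real.exp k * (phi (-k / y - y / 2) * (k / y ^ 2 - 1 / 2))) y :=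
    ((hasDerivAt_Phi _).comp y hd2).const_mul (Real.exp k)
  have := h1.sub h2
  refine this.congr_deriv ?_
  rw [show Real.exp k * (phi (-k / y - y / 2) * (k / y ^ 2 - 1 / 2))
      = (Real.exp k * phi (-k / y - y / 2)) * (k / y ^ 2 - 1 / 2) by ring,
    phi_d1_eq hy']
  ring

lemma CBS_strictMonoOn (k : ℝ) : StrictMonoOn (CBS k) (Ioi 0) := by
  have key : StrictMonoOn (fun w => Phi (-k / w + w / 2) - Real.exp k * Phi (-k / w - w / 2))
      (Ioi 0) := by
    apply strictMonoOn_of_deriv_pos (convex_Ioi 0)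
    · intro y hy
      exact (hasDerivAt_CBSy k hy).continuousAt.continuousWithinAt
    · intro y hy
      rw [interior_Ioi] at hy
      rw [(hasDerivAt_CBSy k hy).deriv]
      exact phi_pos _
  intro a ha b hb hab
  rw [CBS_eq ha, CBS_eq hb]
  exact key ha hb hab

lemma CBS_continuousOn (k : ℝ) : ContinuousOn (CBS k) (Ioi 0) := by
  intro y hy
  have h1 : ContinuousAt (fun w => Phi (-k / w + w / 2) - Real.exp k * Phi (-k / w - w / 2)) y :=
    (hasDerivAt_CBSy k hy).continuousAt
  have h2 : CBS k =ᶠ[nhds y] fun w => Phi (-k / w + w / 2) - Real.exp k * Phi (-k / w - w / 2) := by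
    filter_upwards [Ioi_mem_nhds hy] with w hw
    exact CBS_eq hw
  exact (h1.congr h2.symm).continuousWithinAt

lemma sq_sqrt_two_k {k : ℝ} (hk : 0 ≤ k) : Real.sqrt (2 * k) ^ 2 = 2 * k := by
  rw [sq]; exact Real.mul_self_sqrt (by linarith)

lemma d1_eq {k y : ℝ} (hy : 0 < y) (hk : 0 ≤ k) :
    -k / y + y / 2 = (y - Real.sqrt (2*k)) - (y - Real.sqrt (2*k))^2 / (2*y) := by
  have h := sq_sqrt_two_k hk
  set s := Real.sqrt (2*k) with hs
  have hy' : y ≠ 0 := ne_of_gt hy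
  field_simp
  nlinarith [h]

lemma d1_le {k y : ℝ} (hy : 0 < y) (hk : 0 ≤ k) :
    -k / y + y / 2 ≤ y - Real.sqrt (2 * k) := by
  rw [d1_eq hy hk]
  have := div_nonneg (sq_nonneg (y - Real.sqrt (2*k))) (by linarith : (0:ℝ) ≤ 2*y)
  linarith

lemma d2_ge {k y : ℝ} (hy : 0 < y) (hk : 0 ≤ k) :
    Real.sqrt (2 * k) ≤ k / y + y / 2 := by
  have h := sq_sqrt_two_k hk
  set s := Real.sqrt (2*k) with hs
  have key : k / y + y / 2 - s = (y - s)^2 / (2*y) := by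
    field_simp
    nlinarith [h]
  have := div_nonneg (sq_nonneg (y - s)) (by linarith : (0:ℝ) ≤ 2*y)
  linarith

lemma Phi_lip {a b : ℝ} (hab : a ≤ b) : Phi b - Phi a ≤ b - a := by
  rw [Phi_sub_Phi]
  calc ∫ z in a..b, phi z ≤ ∫ z in a..b, (1:ℝ) := by
        apply intervalIntegral.integral_mono_on hab
          (phi_integrable.intervalIntegrable) (intervalIntegrable_const)
        intro z _
        exact phi_le_one z
    _ = b - a := by simp

lemma Phi_incr_ge {a b B : ℝ} (hab : a ≤ b) (ha : -B ≤ a) (hb : b ≤ B) :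
    (b - a) * phi B ≤ Phi b - Phi a := by
  rw [Phi_sub_Phi]
  have key : ∀ z ∈ Icc a b, phi B ≤ phi z := by
    intro z hz
    unfold phi
    have hz2 : z^2 ≤ B^2 := by nlinarith [hz.1, hz.2]
    have : Real.exp (-B ^ 2 / 2) ≤ Real.exp (-z ^ 2 / 2) := by
      apply Real.exp_le_exp.2; linarith
    nlinarith [inv_pos.2 sqrt_two_pi_pos]
  calc (b - a) * phi B = ∫ _ in a..b, phi B := by simp [mul_comm]
    _ ≤ ∫ z in a..b, phi z := by
        apply intervalIntegral.integral_mono_on hab intervalIntegrable_const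
          (phi_integrable.intervalIntegrable)
        exact key

lemma CBS_le_Phi {k y : ℝ} (hy : 0 < y) (hk : 0 ≤ k) :
    CBS k y ≤ Phi (y - Real.sqrt (2*k)) := by
  rw [CBS_eq hy]
  have h1 : Phi (-k/y + y/2) ≤ Phi (y - Real.sqrt (2*k)) :=
    Phi_strictMono.monotone (d1_le hy hk)
  have h2 : 0 ≤ Real.exp k * Phi (-k/y - y/2) :=
    mul_nonneg (Real.exp_pos k).le (Phi_nonneg _)
  linarith

lemma tail_le {k y : ℝ} (hy : 0 < y) (hk : 0 < k) :
    Real.exp k * Phi (-k/y - y/2) ≤ 1 / Real.sqrt (2*k) := by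
  have hs : 0 < Real.sqrt (2*k) := Real.sqrt_pos.2 (by linarith)
  have hd2 : 0 < k/y + y/2 := by positivity
  have harg : -k/y - y/2 = -(k/y + y/2) := by ring
  have h1 : Phi (-k/y - y/2) ≤ phi (k/y + y/2) / (k/y + y/2) := by
    rw [harg]; exact Phi_neg_le hd2
  have h2 : Real.exp k * phi (k/y + y/2) = phi (-k/y + y/2) := by
    rw [← phi_even (k/y + y/2), ← harg]
    exact phi_d1_eq (ne_of_gt hy)
  have h3 : Real.exp k * Phi (-k/y - y/2) ≤ phi (-k/y + y/2) / (k/y + y/2) := by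
    rw [← h2, mul_div_assoc]
    exact mul_le_mul_of_nonneg_left h1 (Real.exp_pos k).le
  have h4 : phi (-k/y + y/2) / (k/y + y/2) ≤ 1 / (k/y + y/2) := by
    gcongr; exact phi_le_one _
  have h5 : 1 / (k/y + y/2) ≤ 1 / Real.sqrt (2*k) :=
    one_div_le_one_div_of_le hs (d2_ge hy hk.le)
  linarith

lemma CBS_ge_Phi {k y : ℝ} (hy : 0 < y) (hk : 0 < k) :
    Phi (y - Real.sqrt (2*k)) - (y - Real.sqrt (2*k))^2/(2*y) - 1/Real.sqrt (2*k) ≤ CBS k y := by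
  rw [CBS_eq hy]
  have hd1le := d1_le hy hk.le
  have h1 : Phi (y - Real.sqrt (2*k)) - Phi (-k/y + y/2)
      ≤ (y - Real.sqrt (2*k)) - (-k/y + y/2) := Phi_lip hd1le
  have h2 : (y - Real.sqrt (2*k)) - (-k/y + y/2) = (y - Real.sqrt (2*k))^2/(2*y) := by
    rw [d1_eq hy hk.le]; ring
  have h3 := tail_le hy hk
  linarith

lemma sqrt_tendsto_atTop : Tendsto Real.sqrt atTop atTop := by
  rw [tendsto_atTop_atTop]
  intro b
  refine ⟨b^2, fun x hx => ?_⟩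
  have h1 : Real.sqrt (b^2) ≤ Real.sqrt x := Real.sqrt_le_sqrt hx
  have h2 : b ≤ Real.sqrt (b^2) := by
    rw [Real.sqrt_sq_eq_abs]; exact le_abs_self b
  linarith


theorem stmt_19 (c : ℝ → ℝ) (u : ℝ) (hu0 : 0 < u) (hu1 : u < 1)
    (hdom : ∀ k : ℝ, max (1 - Real.exp k) 0 ≤ c k ∧ c k < 1)
    (hlim : Tendsto c atTop (nhds u)) :
    (fun k : ℝ => YBS k (c k) - (Real.sqrt (2 * k) + PhiInv u)) =O[atTop]
      (fun k : ℝ => 1 / Real.sqrt k + |c k - u|) := by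
  have hPz : Phi (PhiInv u) = u := Phi_PhiInv hu0 hu1
  set zs := PhiInv u with hzs
  set B : ℝ := |zs| + 1 with hB
  have hB0 : 0 < B := by positivity
  set m : ℝ := phi B with hm
  have hm0 : 0 < m := phi_pos B
  set A : ℝ := B^2 + 1 with hA
  have hA0 : 0 < A := by positivity
  set M : ℝ := (1 + A)/m with hM
  have hM0 : 0 < M := by positivity
  have hMm : M * m = 1 + A := by rw [hM, div_mul_cancel₀ _ hm0.ne']
  -- eventual conditions
  have hsqrt2 : Tendsto (fun k : ℝ => Real.sqrt (2*k)) atTop atTop := by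
    apply sqrt_tendsto_atTop.comp
    exact (tendsto_id.const_mul_atTop (by norm_num : (0:ℝ) < 2))
  have ev2 : ∀ᶠ k : ℝ in atTop, 2*B + 2 ≤ Real.sqrt (2*k) := hsqrt2.eventually_ge_atTop _
  have habs : Tendsto (fun k => |c k - u|) atTop (nhds 0) := by
    have h := hlim.sub_const u
    rw [sub_self] at h
    simpa using h.abs
  have hδ0 : Tendsto (fun k : ℝ => 1/Real.sqrt k + |c k - u|) atTop (nhds 0) := by
    have h1 : Tendsto (fun k : ℝ => 1/Real.sqrt k) atTop (nhds 0) := by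
      simp only [one_div]
      exact tendsto_inv_atTop_zero.comp sqrt_tendsto_atTop
    simpa using h1.add habs
  have ev4 : ∀ᶠ k : ℝ in atTop, M * (1/Real.sqrt k + |c k - u|) ≤ 1 := by
    have := (hδ0.const_mul M)
    rw [mul_zero] at this
    exact this.eventually (eventually_le_nhds (by norm_num))
  have ev3 : ∀ᶠ k : ℝ in atTop, |c k - u| < u/2 := by
    have hball : Metric.ball u (u/2) ∈ nhds u := Metric.ball_mem_nhds u (by positivity)
    filter_upwards [hlim hball] with k hk
    simpa [Real.dist_eq] using hk
  rw [isBigO_iff]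
  refine ⟨M, ?_⟩
  filter_upwards [eventually_ge_atTop 1, ev2, ev3, ev4] with k hk1 hk2 hk3 hk4
  have hk0 : (0:ℝ) < k := by linarith
  have hsk : 0 < Real.sqrt k := Real.sqrt_pos.2 hk0
  set s := Real.sqrt (2*k) with hs
  have hs0 : 0 < s := Real.sqrt_pos.2 (by linarith)
  have hss : Real.sqrt k ≤ s := Real.sqrt_le_sqrt (by linarith)
  set D : ℝ := 1/Real.sqrt k + |c k - u| with hD
  have hD1 : 1/Real.sqrt k ≤ D := by
    have := abs_nonneg (c k - u); rw [hD]; linarith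
  have hDpos : 0 < D := lt_of_lt_of_le (by positivity) hD1
  have hDabs : |c k - u| < D := by
    have : 0 < 1/Real.sqrt k := by positivity
    rw [hD]; linarith
  set e : ℝ := M * D with he
  have he0 : 0 < e := by positivity
  have he1 : e ≤ 1 := hk4
  have hzsB1 : -B + 1 ≤ zs := by
    have := neg_abs_le zs; rw [hB]; linarith
  have hzsB2 : zs ≤ B - 1 := by
    have := le_abs_self zs; rw [hB]; linarith
  set yu : ℝ := s + zs + e with hyu
  set yd : ℝ := s + zs - e with hyd
  have hyd_pos : 0 < yd := by rw [hyd]; linarith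
  have hyu_pos : 0 < yu := by rw [hyu]; linarith
  have hydu : yd ≤ yu := by rw [hyd, hyu]; linarith
  have hzu1 : -B ≤ zs + e := by linarith
  have hzu2 : zs + e ≤ B := by linarith
  have hzd1 : -B ≤ zs - e := by linarith
  have hzd2 : zs - e ≤ B := by linarith
  clear_value zs B m A M s D e yu yd
  -- upper estimate : c k ≤ CBS k yu
  have h_up : c k ≤ CBS k yu := by
    have h0 := CBS_ge_Phi hyu_pos hk0
    rw [← hs] at h0
    have harg : yu - s = zs + e := by rw [hyu]; ring
    rw [harg] at h0
    have hb1 : (zs + e)^2/(2*yu) ≤ B^2/s := by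
      apply div_le_div₀ (by positivity) (sq_le_sq' hzu1 hzu2) hs0
      rw [hyu]; linarith
    have hb2 : B^2/s ≤ B^2/Real.sqrt k := by gcongr
    have hb3 : 1/s ≤ 1/Real.sqrt k := one_div_le_one_div_of_le hsk hss
    have hincr : (zs + e - zs) * m ≤ Phi (zs + e) - Phi zs := by
      have := Phi_incr_ge (a := zs) (b := zs + e) (B := B) (by linarith) (by linarith) hzu2
      rwa [← hm] at this
    have hPhiup : u + e * m ≤ Phi (zs + e) := by
      have h2 := hincr
      rw [hPz] at h2
      linarith [h2]
    have hAk : B^2/Real.sqrt k + 1/Real.sqrt k ≤ A * D := by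
      have h1 : B^2/Real.sqrt k + 1/Real.sqrt k = A * (1/Real.sqrt k) := by
        rw [hA]; field_simp
      rw [h1]
      exact mul_le_mul_of_nonneg_left hD1 hA0.le
    have hem : e * m = (1 + A) * D := by rw [he]; rw [← hMm]; ring
    have hcku : c k - u ≤ D := le_trans (le_abs_self _) hDabs.le
    have s1 : Phi (zs + e) - B^2/Real.sqrt k - 1/Real.sqrt k ≤ CBS k yu := by
      linarith [h0, hb1, hb2, hb3]
    have s2 : u + D + A * D - A * D ≤ CBS k yu := by
      linarith [s1, hPhiup, hAk, hem]
    linarith [s2, hcku]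
  -- lower estimate : CBS k yd < c k
  have h_dn : CBS k yd < c k := by
    have h0 := CBS_le_Phi hyd_pos hk0.le
    rw [← hs] at h0
    have harg : yd - s = zs - e := by rw [hyd]; ring
    rw [harg] at h0
    have hincr : (zs - (zs - e)) * m ≤ Phi zs - Phi (zs - e) := by
      have := Phi_incr_ge (a := zs - e) (b := zs) (B := B) (by linarith) hzd1 (by linarith)
      rwa [← hm] at this
    have hPhidn : Phi (zs - e) ≤ u - e * m := by
      have : zs - (zs - e) = e := by ring
      rw [this, hPz] at hincr; linarith
    have hem : e * m = (1 + A) * D := by rw [he]; rw [← hMm]; ring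
    have huc : u - c k ≤ |c k - u| := by
      rw [abs_sub_comm]; exact le_abs_self _
    have hAD : 0 < A * D := mul_pos hA0 hDpos
    linarith [h0, hPhidn, hem, hAD, hDabs, huc]
  -- intermediate value
  have hcont : ContinuousOn (CBS k) (Icc yd yu) :=
    (CBS_continuousOn k).mono (fun x hx => lt_of_lt_of_le hyd_pos hx.1)
  obtain ⟨y₀, hy₀mem, hy₀⟩ := intermediate_value_Icc hydu hcont ⟨h_dn.le, h_up⟩
  have hy₀pos : 0 < y₀ := lt_of_lt_of_le hyd_pos hy₀mem.1
  have hy₀S : y₀ ∈ {y : ℝ | 0 ≤ y ∧ CBS k y = c k} := ⟨hy₀pos.le, hy₀⟩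
  have hck_pos : 0 < c k := by
    have := abs_lt.1 hk3
    linarith [this.1]
  have hlb : ∀ y ∈ {y : ℝ | 0 ≤ y ∧ CBS k y = c k}, yd ≤ y := by
    rintro y ⟨hy0, hyc⟩
    by_contra hlt
    push_neg at hlt
    rcases eq_or_lt_of_le hy0 with h|h
    · have hc0 : CBS k 0 = 0 := by
        rw [CBS, if_neg (lt_irrefl 0)]
        have : (1:ℝ) < Real.exp k := by
          rw [← Real.exp_zero]; exact Real.exp_lt_exp.2 hk0
        rw [max_eq_right (by linarith)]
      rw [← h, hc0] at hyc
      linarith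
    · have := CBS_strictMonoOn k (mem_Ioi.2 h) (mem_Ioi.2 hyd_pos) hlt
      linarith [hyc ▸ this, h_dn]
  have hle_inf : yd ≤ YBS k (c k) := le_csInf ⟨y₀, hy₀S⟩ hlb
  have hinf_le : YBS k (c k) ≤ y₀ :=
    csInf_le ⟨0, fun y hy => hy.1⟩ hy₀S
  have hbound : |YBS k (c k) - (s + zs)| ≤ e := by
    rw [abs_le]
    constructor
    · rw [hyd] at hle_inf; linarith
    · have := hy₀mem.2; rw [hyu] at this; linarith
  rw [Real.norm_eq_abs, Real.norm_eq_abs, abs_of_pos hDpos]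
  rw [he] at hbound
  exact hbound
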